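/- Fix c ≥ 1 and n ≥ 2. Let AN_n be the free abelian-by-nilpotent group of rank n (relative to nilpotency class c), and let ÃN_n = AN_n / ⟨⟨x_1², …, x_n²⟩⟩ with generating family Y = (y_1, …, y_n). Then n ≤ pw(ÃN_n, Y) ≤ 3n. -/

import Mathlib

/-- The element of `G` represented by a word in the alphabet `X^{±1}`:
a letter `(i, true)` stands for `X i` and `(i, false)` for `(X i)⁻¹`. -/
def evalWord {G : Type*} {n : ℕ} [Group G] (X : Fin n → G) (w : List (Fin n × Bool)) : G :=
  (w.map fun l => if l.2 then X l.1 else (X l.1)⁻¹).prod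

/-- `g` is a palindrome with respect to the generating family `X` if it is represented by
some word whose sequence of letters equals its reverse. -/
def IsPalindrome {G : Type*} {n : ℕ} [Group G] (X : Fin n → G) (g : G) : Prop :=
  ∃ w : List (Fin n × Bool), w.reverse = w ∧ evalWord X w = g

/-- `g` is a product of `k` palindromes with respect to `X`. -/
def IsPalProd {G : Type*} {n : ℕ} [Group G] (X : Fin n → G) (k : ℕ) (g : G) : Prop :=
  ∃ f : Fin k → G, (∀ i, IsPalindrome X (f i)) ∧ (List.ofFn f).prod = g

/-- The palindromic length of `g` with respect to `X`, valued in `ℕ∞`. -/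
noncomputable def palLength {G : Type*} {n : ℕ} [Group G] (X : Fin n → G) (g : G) : ℕ∞ :=
  sInf {k : ℕ∞ | ∃ m : ℕ, k = (m : ℕ∞) ∧ IsPalProd X m g}

/-- The palindromic width of `G` with respect to `X`, valued in `ℕ∞`. -/
noncomputable def palWidth {G : Type*} {n : ℕ} [Group G] (X : Fin n → G) : ℕ∞ :=
  ⨆ g : G, palLength X g

/-- The free abelian-by-nilpotent group `AN_n` of rank `n` and class `c`: the quotient of
the free group `F` on `n` generators by `[N, N]`, where `N = γ_{c+1}(F)` is the `(c+1)`-st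
term of the lower central series of `F` (so `N = lowerCentralSeries F c`, since `γ_1`
corresponds to index `0`). -/
abbrev FreeAbelianByNilpotent (n c : ℕ) :=
  FreeGroup (Fin n) ⧸
    ⁅Subgroup.lowerCentralSeries (⊤ : Subgroup (FreeGroup (Fin n))) c,
      Subgroup.lowerCentralSeries (⊤ : Subgroup (FreeGroup (Fin n))) c⁆

/-- The images `x_1, …, x_n` of the free basis in `AN_n`. -/
def anGen (n c : ℕ) (i : Fin n) : FreeAbelianByNilpotent n c :=
  QuotientGroup.mk (FreeGroup.of i)

/-- `ÃN_n`: the quotient of `AN_n` by the normal closure of the squares of the generators. -/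
abbrev TildeAN (n c : ℕ) :=
  FreeAbelianByNilpotent n c ⧸ Subgroup.normalClosure (Set.range fun i : Fin n => anGen n c i ^ 2)

/-- The generating family `y_1, …, y_n` of `ÃN_n`. -/
def tanGen (n c : ℕ) (i : Fin n) : TildeAN n c := QuotientGroup.mk (anGen n c i)

open scoped commutatorElement

attribute [-simp] Subgroup.lowerCentralSeries_succ

section Lists
variable {G : Type*} [Group G]

/-- twist accumulator for pushing second components right -/
def twAcc : List (G × G) → G
  | [] => 1
  | p :: t => ((t.map Prod.fst).prod)⁻¹ * p.2 * (t.map Prod.fst).prod * twAcc t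

lemma push_prod : ∀ L : List (G × G),
    (L.map fun p => p.1 * p.2).prod = (L.map Prod.fst).prod * twAcc L := by
  intro L
  induction L with
  | nil => simp [twAcc]
  | cons p t ih =>
    simp only [List.map_cons, List.prod_cons, twAcc, ih]
    group

lemma tw_ofFn : ∀ {m : ℕ} (u C : Fin m → G), twAcc (List.ofFn fun i => (u i, C i)) =
    (List.ofFn fun i =>
      (((List.ofFn u).drop (i.val+1)).prod)⁻¹ * C i * ((List.ofFn u).drop (i.val+1)).prod).prod := by
  intro m
  induction m with
  | zero => intro u C; simp [twAcc]
  | succ m ih =>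
    intro u C
    rw [List.ofFn_succ, List.ofFn_succ (f := fun i =>
      (((List.ofFn u).drop (i.val+1)).prod)⁻¹ * C i * ((List.ofFn u).drop (i.val+1)).prod)]
    simp only [twAcc, ih (fun i => u i.succ) (fun i => C i.succ)]
    rw [List.ofFn_succ (f := u)]
    simp [List.prod_cons, Fin.val_succ, Function.comp_def]

lemma ofFn_prod_map {H : Type*} [Group H] (f : G →* H) {m : ℕ} (x : Fin m → G) :
    f (List.ofFn x).prod = (List.ofFn fun i => f (x i)).prod := by
  rw [show (fun i => f (x i)) = f ∘ x from rfl, ← List.map_ofFn]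
  exact map_list_prod f _

end Lists

section CommIds
variable {G : Type*} [Group G]

lemma comm_mul_right (x g b : G) : ⁅x, g * b⁆ = ⁅x, g⁆ * (g * ⁅x, b⁆ * g⁻¹) := by
  simp only [commutatorElement_def]; group

lemma comm_mul_left (q r a : G) : ⁅q * r, a⁆ = ⁅q, r * a * r⁻¹⁆ * ⁅r, a⁆ := by
  simp only [commutatorElement_def]; group

lemma conj_comm_eq (w x y : G) : w * ⁅x, y⁆ * w⁻¹ = ⁅w * x * w⁻¹, w * y * w⁻¹⁆ := by
  simp only [commutatorElement_def]; group

-- products with central second components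
lemma prod_mul_central {m : ℕ} (u w : Fin m → G) (hw : ∀ i, w i ∈ Subgroup.center G) :
    (List.ofFn fun i => u i * w i).prod = (List.ofFn u).prod * (List.ofFn w).prod := by
  induction m with
  | zero => simp
  | succ m ih =>
    rw [List.ofFn_succ (f := fun i => u i * w i), List.ofFn_succ (f := u),
      List.ofFn_succ (f := w)]
    simp only [List.prod_cons]
    rw [ih (fun i => u i.succ) (fun i => w i.succ) (fun i => hw _)]
    have h0 : ∀ z : G, w 0 * z = z * w 0 := fun z =>
      (Subgroup.mem_center_iff.mp (hw 0) z).symm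
    rw [mul_assoc (u 0), ← mul_assoc _ (w 0), h0, mul_assoc, h0]
    group

lemma prod_inv_central {m : ℕ} (w : Fin m → G) (hw : ∀ i, w i ∈ Subgroup.center G) :
    ((List.ofFn w).prod)⁻¹ = (List.ofFn fun i => (w i)⁻¹).prod := by
  induction m with
  | zero => simp
  | succ m ih =>
    rw [List.ofFn_succ (f := w), List.ofFn_succ (f := fun i => (w i)⁻¹)]
    simp only [List.prod_cons, mul_inv_rev]
    rw [ih (fun i => w i.succ) (fun i => hw _)]
    exact Subgroup.mem_center_iff.mp ((Subgroup.center G).inv_mem (hw 0)) _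

-- merge lemmas inside a commutative subgroup
variable {A : Subgroup G} (habel : ∀ a ∈ A, ∀ b ∈ A, a * b = b * a)

include habel in
lemma prod_mul_subgroup {m : ℕ} (u w : Fin m → G) (hu : ∀ i, u i ∈ A) (hw : ∀ i, w i ∈ A) :
    (List.ofFn u).prod * (List.ofFn w).prod = (List.ofFn fun i => u i * w i).prod := by
  induction m with
  | zero => simp
  | succ m ih =>
    rw [List.ofFn_succ (f := fun i => u i * w i), List.ofFn_succ (f := u),
      List.ofFn_succ (f := w)]
    simp only [List.prod_cons]
    rw [← ih (fun i => u i.succ) (fun i => w i.succ) (fun i => hu _) (fun i => hw _)]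
    have hup : (List.ofFn fun i => u i.succ).prod ∈ A :=
      Subgroup.list_prod_mem _ (by simp only [List.mem_ofFn]; rintro x ⟨j, rfl⟩; exact hu _)
    have := habel _ hup _ (hw 0)
    rw [mul_assoc (u 0), ← mul_assoc _ (w 0), this]
    group

include habel in
lemma prod_inv_subgroup {m : ℕ} (w : Fin m → G) (hw : ∀ i, w i ∈ A) :
    ((List.ofFn w).prod)⁻¹ = (List.ofFn fun i => (w i)⁻¹).prod := by
  induction m with
  | zero => simp
  | succ m ih =>
    rw [List.ofFn_succ (f := w), List.ofFn_succ (f := fun i => (w i)⁻¹)]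
    simp only [List.prod_cons, mul_inv_rev]
    rw [ih (fun i => w i.succ) (fun i => hw _)]
    have hup : (List.ofFn fun i => (w i.succ)⁻¹).prod ∈ A :=
      Subgroup.list_prod_mem _ (by simp only [List.mem_ofFn]; rintro x ⟨j, rfl⟩; exact A.inv_mem (hw _))
    exact habel _ hup _ (A.inv_mem (hw 0))

end CommIds

section Lcs
variable {G : Type*} [Group G]

lemma lcs_map_eq {H : Type*} [Group H] (f : G →* H) (hf : Function.Surjective f) (k : ℕ) :
    Subgroup.map f (Subgroup.lowerCentralSeries (⊤ : Subgroup G) k) = Subgroup.lowerCentralSeries (⊤ : Subgroup H) k := by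
  induction k with
  | zero => simpa using Subgroup.map_top_of_surjective f hf
  | succ k ih =>
    have e1 : Subgroup.lowerCentralSeries (⊤ : Subgroup G) (k+1) = ⁅Subgroup.lowerCentralSeries (⊤ : Subgroup G) k, ⊤⁆ := rfl
    have e2 : Subgroup.lowerCentralSeries (⊤ : Subgroup H) (k+1) = ⁅Subgroup.lowerCentralSeries (⊤ : Subgroup H) k, ⊤⁆ := rfl
    rw [e1, e2, ← ih, ← Subgroup.map_top_of_surjective f hf, ← Subgroup.map_commutator]

lemma comm_mem_lcs_succ {k : ℕ} {b : G} (hb : b ∈ Subgroup.lowerCentralSeries (⊤ : Subgroup G) k) (x : G) :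
    ⁅x, b⁆ ∈ Subgroup.lowerCentralSeries (⊤ : Subgroup G) (k + 1) := by
  have : ⁅b, x⁆ ∈ Subgroup.lowerCentralSeries (⊤ : Subgroup G) (k + 1) := by
    rw [Subgroup.lowerCentralSeries_succ]
    exact Subgroup.commutator_mem_commutator hb (Subgroup.mem_top x)
  simpa [commutatorElement_inv] using (Subgroup.lowerCentralSeries (⊤ : Subgroup G) (k+1)).inv_mem this

lemma comm_mem_lcs_succ' {k : ℕ} {b : G} (hb : b ∈ Subgroup.lowerCentralSeries (⊤ : Subgroup G) k) (x : G) :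
    ⁅b, x⁆ ∈ Subgroup.lowerCentralSeries (⊤ : Subgroup G) (k + 1) := by
  rw [Subgroup.lowerCentralSeries_succ]
  exact Subgroup.commutator_mem_commutator hb (Subgroup.mem_top x)

lemma central_mk {k : ℕ} {b : G} (hb : b ∈ Subgroup.lowerCentralSeries (⊤ : Subgroup G) k) :
    (QuotientGroup.mk' (Subgroup.lowerCentralSeries (⊤ : Subgroup G) (k+1)) b) ∈
      Subgroup.center (G ⧸ Subgroup.lowerCentralSeries (⊤ : Subgroup G) (k+1)) := by
  rw [Subgroup.mem_center_iff]
  intro ξ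
  obtain ⟨g, rfl⟩ := QuotientGroup.mk'_surjective _ ξ
  have : (QuotientGroup.mk' (Subgroup.lowerCentralSeries (⊤ : Subgroup G) (k+1)) ⁅g, b⁆) = 1 := by
    rw [QuotientGroup.mk'_apply, QuotientGroup.eq_one_iff]
    exact comm_mem_lcs_succ hb g
  rw [map_commutatorElement] at this
  exact (commutatorElement_eq_one_iff_commute.mp this).eq

end Lcs

section Machinery
variable {H : Type*} [Group H] {n : ℕ}

lemma conj_central {Q : Type*} [Group Q] {z : Q} (hz : z ∈ Subgroup.center Q) (g : Q) :
    g * (z * g⁻¹) = z := by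
  rw [← mul_assoc, Subgroup.mem_center_iff.mp hz g]; group

lemma ofFn_ite_prod {M : Type*} [Monoid M] : ∀ {m : ℕ} (j : Fin m) (v : M),
    (List.ofFn fun i => if i = j then v else 1).prod = v := by
  intro m
  induction m with
  | zero => exact fun j => j.elim0
  | succ m ih =>
    intro j v
    cases j using Fin.cases with
    | zero => simp [List.ofFn_succ, Fin.succ_ne_zero]
    | succ j' =>
      rw [List.ofFn_succ]
      simp only [List.prod_cons]
      rw [if_neg (Fin.succ_ne_zero j').symm, one_mul]
      have : (fun i : Fin m => if i.succ = j'.succ then v else 1) =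
          fun i : Fin m => if i = j' then v else 1 := by
        funext i; simp [Fin.succ_inj]
      rw [this, ih]

lemma comm_central_right {G : Type*} [Group G] (a b v : G) (hv : v ∈ Subgroup.center G) :
    ⁅a, b * v⁆ = ⁅a, b⁆ := by
  have h1 : a⁻¹ * v = v * a⁻¹ := Subgroup.mem_center_iff.mp hv a⁻¹
  have key : v * a⁻¹ * v⁻¹ = a⁻¹ := by rw [← h1]; group
  simp only [commutatorElement_def, mul_inv_rev]
  calc a * (b * v) * a⁻¹ * (v⁻¹ * b⁻¹) = a * b * (v * a⁻¹ * v⁻¹) * b⁻¹ := by group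
  _ = a * b * a⁻¹ * b⁻¹ := by rw [key]

lemma comm_central_left {G : Type*} [Group G] (a b u : G) (hu : u ∈ Subgroup.center G) :
    ⁅a * u, b⁆ = ⁅a, b⁆ := by
  have h1 : b * u = u * b := Subgroup.mem_center_iff.mp hu b
  have key : u * b * u⁻¹ = b := by rw [← h1]; group
  simp only [commutatorElement_def, mul_inv_rev]
  calc a * u * b * (u⁻¹ * a⁻¹) * b⁻¹ = a * (u * b * u⁻¹) * a⁻¹ * b⁻¹ := by group
  _ = a * b * a⁻¹ * b⁻¹ := by rw [key]

/-- If `K ⊔ γ_k = ⊤` then `K ⊔ γ_{k+1} = ⊤` (as membership statements). -/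
lemma sup_lcs_step (K : Subgroup H) (k : ℕ) (hk : 1 ≤ k)
    (h : ∀ x : H, x ∈ K ⊔ Subgroup.lowerCentralSeries (⊤ : Subgroup H) k) :
    ∀ x : H, x ∈ K ⊔ Subgroup.lowerCentralSeries (⊤ : Subgroup H) (k+1) := by
  intro x
  set π := QuotientGroup.mk' (Subgroup.lowerCentralSeries (⊤ : Subgroup H) (k+1)) with hπ
  have hπs : Function.Surjective π := QuotientGroup.mk'_surjective _
  have hcover : ∀ ξ : H ⧸ Subgroup.lowerCentralSeries (⊤ : Subgroup H) (k+1),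
      ∃ a ∈ Subgroup.map π K, ∃ b, (b ∈ Subgroup.map π (Subgroup.lowerCentralSeries (⊤ : Subgroup H) k)) ∧ ξ = a * b := by
    intro ξ
    obtain ⟨g, rfl⟩ := hπs ξ
    have hg := h g
    rw [← SetLike.mem_coe, Subgroup.mul_normal] at hg
    obtain ⟨a, ha, b, hb, rfl⟩ := hg
    exact ⟨π a, Subgroup.mem_map_of_mem π ha, π b,
      Subgroup.mem_map_of_mem π hb, (map_mul π a b).symm⟩
  have hcent : ∀ b ∈ Subgroup.map π (Subgroup.lowerCentralSeries (⊤ : Subgroup H) k),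
      b ∈ Subgroup.center (H ⧸ Subgroup.lowerCentralSeries (⊤ : Subgroup H) (k+1)) := by
    rintro b ⟨b', hb', rfl⟩
    exact central_mk hb'
  have hcomm : commutator (H ⧸ Subgroup.lowerCentralSeries (⊤ : Subgroup H) (k+1)) ≤ Subgroup.map π K := by
    rw [commutator_def, Subgroup.commutator_le]
    intro g1 _ g2 _
    obtain ⟨a1, ha1, b1, hb1, rfl⟩ := hcover g1
    obtain ⟨a2, ha2, b2, hb2, rfl⟩ := hcover g2
    rw [comm_central_right _ _ _ (hcent _ hb2), comm_central_left _ _ _ (hcent _ hb1),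
      commutatorElement_def]
    exact Subgroup.mul_mem _ (Subgroup.mul_mem _ (Subgroup.mul_mem _ ha1 ha2)
      (Subgroup.inv_mem _ ha1)) (Subgroup.inv_mem _ ha2)
  have hN : Subgroup.map π (Subgroup.lowerCentralSeries (⊤ : Subgroup H) k) ≤ Subgroup.map π K := by
    calc Subgroup.map π (Subgroup.lowerCentralSeries (⊤ : Subgroup H) k) ≤ Subgroup.map π (Subgroup.lowerCentralSeries (⊤ : Subgroup H) 1) :=
        Subgroup.map_mono (Subgroup.lowerCentralSeries_antitone _ hk)
    _ = Subgroup.lowerCentralSeries (⊤ : Subgroup (H ⧸ Subgroup.lowerCentralSeries (⊤ : Subgroup H) (k+1))) 1 := lcs_map_eq π hπs 1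
    _ = commutator _ := Subgroup.top_lowerCentralSeries_one
    _ ≤ Subgroup.map π K := hcomm
  -- now π x ∈ map π K
  have hx : π x ∈ Subgroup.map π K := by
    obtain ⟨a, ha, b, hb, hab⟩ := hcover (π x)
    rw [hab]
    exact Subgroup.mul_mem _ ha (hN hb)
  obtain ⟨kk, hkk, hkx⟩ := hx
  have : kk⁻¹ * x ∈ Subgroup.lowerCentralSeries (⊤ : Subgroup H) (k+1) := by
    rw [← QuotientGroup.ker_mk' (Subgroup.lowerCentralSeries (⊤ : Subgroup H) (k+1)), MonoidHom.mem_ker, map_mul,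
      map_inv, hkx]
    exact inv_mul_cancel _
  have hx2 : x = kk * (kk⁻¹ * x) := by group
  rw [hx2]
  exact Subgroup.mul_mem _ (Subgroup.mem_sup_left hkk) (Subgroup.mem_sup_right this)

end Machinery

section Layer
variable {H : Type*} [Group H] {n : ℕ}

lemma layer (y : Fin n → H)
    (hgen : ∀ g : H, ∃ L : List (Fin n), g = (L.map y).prod)
    (k : ℕ) (hk : 1 ≤ k) (e : H) (he : e ∈ Subgroup.lowerCentralSeries (⊤ : Subgroup H) k) :
    ∃ b : Fin n → H, (∀ i, b i ∈ Subgroup.lowerCentralSeries (⊤ : Subgroup H) (k-1)) ∧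
      (QuotientGroup.mk' (Subgroup.lowerCentralSeries (⊤ : Subgroup H) (k+1))) e =
        (List.ofFn fun i => (QuotientGroup.mk' (Subgroup.lowerCentralSeries (⊤ : Subgroup H) (k+1))) ⁅y i, b i⁆).prod := by
  set π := QuotientGroup.mk' (Subgroup.lowerCentralSeries (⊤ : Subgroup H) (k+1)) with hπdef
  set P : H → Prop := fun x => ∃ b : Fin n → H, (∀ i, b i ∈ Subgroup.lowerCentralSeries (⊤ : Subgroup H) (k-1)) ∧
      π x = (List.ofFn fun i => π ⁅y i, b i⁆).prod with hP
  have hcomm_k : ∀ (p : H), p ∈ Subgroup.lowerCentralSeries (⊤ : Subgroup H) (k-1) → ∀ w : H,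
      ⁅w, p⁆ ∈ Subgroup.lowerCentralSeries (⊤ : Subgroup H) k := by
    intro p hp w
    have := comm_mem_lcs_succ hp w
    rwa [Nat.sub_add_cancel hk] at this
  have hcent : ∀ x, x ∈ Subgroup.lowerCentralSeries (⊤ : Subgroup H) k → π x ∈ Subgroup.center _ := fun x hx =>
    central_mk hx
  have hPcongr : ∀ x x' : H, π x = π x' → P x' → P x := by
    rintro x x' hxx ⟨b, hb, heq⟩; exact ⟨b, hb, by rw [hxx, heq]⟩
  have hPone : P 1 := ⟨fun _ => 1, fun _ => Subgroup.one_mem _, by simp⟩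
  have hmerge : ∀ (i : Fin n) (b1 b2 : H), b1 ∈ Subgroup.lowerCentralSeries (⊤ : Subgroup H) (k-1) →
      b2 ∈ Subgroup.lowerCentralSeries (⊤ : Subgroup H) (k-1) →
      π ⁅y i, b1⁆ * π ⁅y i, b2⁆ = π ⁅y i, b1 * b2⁆ := by
    intro i b1 b2 hb1 hb2
    rw [comm_mul_right (y i) b1 b2, map_mul, map_mul, map_mul, map_inv, mul_assoc (π b1),
      conj_central (hcent _ (hcomm_k _ hb2 _)) (π b1)]
  have hPmul : ∀ x1 x2 : H, P x1 → P x2 → P (x1 * x2) := by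
    rintro x1 x2 ⟨b1, hb1, he1⟩ ⟨b2, hb2, he2⟩
    refine ⟨fun i => b1 i * b2 i, fun i => Subgroup.mul_mem _ (hb1 i) (hb2 i), ?_⟩
    rw [map_mul, he1, he2,
      ← prod_mul_central (fun i => π ⁅y i, b1 i⁆) (fun i => π ⁅y i, b2 i⁆)
        (fun i => hcent _ (hcomm_k _ (hb2 i) _))]
    exact congrArg (fun l => List.prod l) (congrArg List.ofFn (funext fun i =>
      hmerge i (b1 i) (b2 i) (hb1 i) (hb2 i)))
  have hPinv : ∀ x : H, P x → P x⁻¹ := by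
    rintro x ⟨b, hb, he⟩
    refine ⟨fun i => (b i)⁻¹, fun i => Subgroup.inv_mem _ (hb i), ?_⟩
    rw [map_inv, he, prod_inv_central _ (fun i => hcent _ (hcomm_k _ (hb i) _))]
    refine congrArg (fun l => List.prod l) (congrArg List.ofFn (funext fun i => ?_))
    have h1 := hmerge i (b i) (b i)⁻¹ (hb i) (Subgroup.inv_mem _ (hb i))
    rw [mul_inv_cancel] at h1
    have h2 : π ⁅y i, (1:H)⁆ = 1 := by simp
    rw [h2] at h1
    exact (eq_inv_of_mul_eq_one_right h1).symm
  have hsingle : ∀ (j : Fin n) (p : H), p ∈ Subgroup.lowerCentralSeries (⊤ : Subgroup H) (k-1) → P ⁅y j, p⁆ := by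
    intro j p hp
    refine ⟨fun i => if i = j then p else 1, fun i => by
      dsimp only; split
      · exact hp
      · exact Subgroup.one_mem _, ?_⟩
    have hfn : (fun i => π ⁅y i, if i = j then p else 1⁆) =
        fun i => if i = j then π ⁅y j, p⁆ else 1 := by
      funext i
      by_cases hij : i = j
      · subst hij; simp
      · simp [hij]
    rw [hfn, ofFn_ite_prod]
  -- the base case of the closure induction: commutators ⁅p, q⁆ with p ∈ γ (k-1)
  have hbase : ∀ (p : H), p ∈ Subgroup.lowerCentralSeries (⊤ : Subgroup H) (k-1) → ∀ q : H, P ⁅p, q⁆ := by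
    intro p hp q
    obtain ⟨L, rfl⟩ := hgen q
    induction L with
    | nil => exact hPcongr _ 1 (by simp) hPone
    | cons j t ih =>
      rw [List.map_cons, List.prod_cons, comm_mul_right p (y j) ((t.map y).prod)]
      refine hPmul _ _ ?_ ?_
      · -- P ⁅p, y j⁆  via inverse of ⁅y j, p⁆
        have : ⁅p, y j⁆ = (⁅y j, p⁆)⁻¹ := (commutatorElement_inv (y j) p).symm
        rw [this]
        exact hPinv _ (hsingle j p hp)
      · -- conjugate of ⁅p, prod⁆
        refine hPcongr _ ⁅p, (t.map y).prod⁆ ?_ ih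
        have HM : ⁅p, (t.map y).prod⁆ ∈ Subgroup.lowerCentralSeries (⊤ : Subgroup H) k := by
          have h2 := comm_mem_lcs_succ' hp ((t.map y).prod)
          rwa [Nat.sub_add_cancel hk] at h2
        rw [map_mul, map_mul, map_inv, mul_assoc (π (y j)),
          conj_central (hcent _ HM) (π (y j))]
  -- run closure induction over γ k = closure of commutators
  have hk' : k = (k-1) + 1 := (Nat.sub_add_cancel hk).symm
  rw [hk', Subgroup.mem_lowerCentralSeries_succ_iff] at he
  have : P e := by
    refine Subgroup.closure_induction (p := fun x _ => P x) ?_ hPone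
      (fun x y _ _ hx hy => hPmul x y hx hy) (fun x _ hx => hPinv x hx) he
    rintro x ⟨p, hp, q, -, rfl⟩
    have : p * q * p⁻¹ * q⁻¹ = ⁅p, q⁆ := rfl
    exact hbase p hp q
  exact this

lemma descent (y : Fin n → H)
    (hgen : ∀ g : H, ∃ L : List (Fin n), g = (L.map y).prod)
    (k : ℕ) (hk : 1 ≤ k) (d : H) (hd : d ∈ Subgroup.lowerCentralSeries (⊤ : Subgroup H) 1) :
    ∃ g : Fin n → H,
      ((List.ofFn fun i => ⁅y i, g i⁆).prod)⁻¹ * d ∈ Subgroup.lowerCentralSeries (⊤ : Subgroup H) k := by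
  induction k, hk using Nat.le_induction with
  | base =>
    refine ⟨fun _ => 1, ?_⟩
    simpa using hd
  | succ k hk ih =>
    obtain ⟨g, hg⟩ := ih
    set e := ((List.ofFn fun i => ⁅y i, g i⁆).prod)⁻¹ * d with he_def
    obtain ⟨b, hb, heq⟩ := layer y hgen k hk e hg
    set π := QuotientGroup.mk' (Subgroup.lowerCentralSeries (⊤ : Subgroup H) (k+1)) with hπdef
    have hcent : ∀ x, x ∈ Subgroup.lowerCentralSeries (⊤ : Subgroup H) k → π x ∈ Subgroup.center _ := fun x hx =>
      central_mk hx
    have hcomm_k : ∀ i, ⁅y i, b i⁆ ∈ Subgroup.lowerCentralSeries (⊤ : Subgroup H) k := by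
      intro i
      have := comm_mem_lcs_succ (hb i) (y i)
      rwa [Nat.sub_add_cancel hk] at this
    refine ⟨fun i => g i * b i, ?_⟩
    rw [← QuotientGroup.ker_mk' (Subgroup.lowerCentralSeries (⊤ : Subgroup H) (k+1)), MonoidHom.mem_ker, map_mul,
      map_inv]
    have key : π ((List.ofFn fun i => ⁅y i, g i * b i⁆).prod) = π d := by
      rw [ofFn_prod_map]
      have hfn : (fun i => π ⁅y i, g i * b i⁆) =
          fun i => π ⁅y i, g i⁆ * π ⁅y i, b i⁆ := by
        funext i
        rw [comm_mul_right (y i) (g i) (b i), map_mul, map_mul, map_mul, map_inv,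
          mul_assoc (π (g i)), conj_central (hcent _ (hcomm_k i)) (π (g i))]
      have e1 : (List.ofFn fun i => π ⁅y i, g i⁆).prod =
          π ((List.ofFn fun i => ⁅y i, g i⁆).prod) := (ofFn_prod_map π (fun i => ⁅y i, g i⁆)).symm
      rw [hfn, prod_mul_central _ _ (fun i => hcent _ (hcomm_k i)), e1, ← heq]
      have : d = (List.ofFn fun i => ⁅y i, g i⁆).prod * e := by rw [he_def]; group
      rw [← map_mul, ← this]
    rw [key]
    exact inv_mul_cancel _
end Layer

section Endgame
variable {H : Type*} [Group H] {n : ℕ}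

theorem comm_width (y : Fin n → H) (c : ℕ) (hc : 1 ≤ c)
    (hgen : ∀ g : H, ∃ L : List (Fin n), g = (L.map y).prod)
    (habel : ∀ a ∈ Subgroup.lowerCentralSeries (⊤ : Subgroup H) c, ∀ b ∈ Subgroup.lowerCentralSeries (⊤ : Subgroup H) c, a * b = b * a)
    (d : H) (hd : d ∈ Subgroup.lowerCentralSeries (⊤ : Subgroup H) 1) :
    ∃ h : Fin n → H, d = (List.ofFn fun i => ⁅y i, h i⁆).prod := by
  classical
  obtain ⟨g, hg⟩ := descent y hgen (c+1) (by omega) d hd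
  set A := Subgroup.lowerCentralSeries (⊤ : Subgroup H) c with hA
  set u : Fin n → H := fun i => ⁅y i, g i⁆ with hu
  set s : Fin n → H := fun i => (((List.ofFn u).drop (i.val+1)).prod) with hs
  set v : Fin n → H := fun i => (s i)⁻¹ * g i with hv
  set z : Fin n → H := fun i => v i * y i * (v i)⁻¹ with hz
  have hAnormal : A.Normal := by rw [hA]; infer_instance
  have hcommA : ∀ (w a : H), a ∈ A → ⁅w, a⁆ ∈ A := by
    intro w a ha
    rw [commutatorElement_def]
    exact A.mul_mem (hAnormal.conj_mem a ha w) (A.inv_mem ha)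
  have hmergeT : ∀ (w a b : H), a ∈ A → b ∈ A → ⁅w, a⁆ * ⁅w, b⁆ = ⁅w, a * b⁆ := by
    intro w a b ha hb
    rw [comm_mul_right w a b, habel a ha _ (hcommA w b hb)]
    group
  have hinvT : ∀ (w a : H), a ∈ A → (⁅w, a⁆)⁻¹ = ⁅w, a⁻¹⁆ := by
    intro w a ha
    have h1 := hmergeT w a a⁻¹ ha (A.inv_mem ha)
    rw [mul_inv_cancel] at h1
    have h2 : ⁅w, (1:H)⁆ = 1 := by simp
    rw [h2] at h1
    exact (eq_inv_of_mul_eq_one_right h1).symm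
  -- the subgroup of products of commutators with prescribed left entries z i
  let T : Subgroup H :=
    { carrier := {x | ∃ a : Fin n → H, (∀ i, a i ∈ A) ∧
        x = (List.ofFn fun i => ⁅z i, a i⁆).prod}
      one_mem' := ⟨fun _ => 1, fun _ => A.one_mem, by simp⟩
      mul_mem' := by
        rintro x1 x2 ⟨a, ha, rfl⟩ ⟨b, hb, rfl⟩
        refine ⟨fun i => a i * b i, fun i => A.mul_mem (ha i) (hb i), ?_⟩
        rw [prod_mul_subgroup habel _ _ (fun i => hcommA _ _ (ha i)) (fun i => hcommA _ _ (hb i))]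
        have hfe : (fun i => ⁅z i, a i⁆ * ⁅z i, b i⁆) = fun i => ⁅z i, a i * b i⁆ :=
          funext fun i => hmergeT (z i) (a i) (b i) (ha i) (hb i)
        rw [hfe]
      inv_mem' := by
        rintro x ⟨a, ha, rfl⟩
        refine ⟨fun i => (a i)⁻¹, fun i => A.inv_mem (ha i), ?_⟩
        rw [prod_inv_subgroup habel _ (fun i => hcommA _ _ (ha i))]
        have hfe : (fun i => (⁅z i, a i⁆)⁻¹) = fun i => ⁅z i, (a i)⁻¹⁆ :=
          funext fun i => hinvT (z i) (a i) (ha i)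
        rw [hfe] }
  have hTmem : ∀ x : H, (∃ a : Fin n → H, (∀ i, a i ∈ A) ∧
      x = (List.ofFn fun i => ⁅z i, a i⁆).prod) ↔ x ∈ T := fun x => Iff.rfl
  -- commutators with entries from the closure of the z's
  have hTclosure : ∀ w : H, w ∈ Subgroup.closure (Set.range z) → ∀ a ∈ A, ⁅w, a⁆ ∈ T := by
    intro w hw
    refine Subgroup.closure_induction (p := fun w _ => ∀ a ∈ A, ⁅w, a⁆ ∈ T) ?_ ?_ ?_ ?_ hw
    · rintro x ⟨i, rfl⟩ a ha
      refine ⟨fun i' => if i' = i then a else 1, fun i' => by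
        dsimp only; split
        · exact ha
        · exact A.one_mem, ?_⟩
      have hfn : (fun i' => ⁅z i', if i' = i then a else 1⁆) =
          fun i' => if i' = i then ⁅z i, a⁆ else 1 := by
        funext i'
        by_cases hii : i' = i
        · subst hii; simp
        · simp [hii]
      rw [hfn, ofFn_ite_prod]
    · intro a _
      have h1 : ⁅(1:H), a⁆ = 1 := by simp
      rw [h1]
      exact T.one_mem
    · intro q r _ _ hq' hr' a ha
      rw [comm_mul_left q r a]
      exact T.mul_mem (hq' _ (hAnormal.conj_mem a ha r)) (hr' _ ha)
    · intro q _ hq' a ha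
      have h1 : ⁅q * q⁻¹, a⁆ = 1 := by simp
      rw [comm_mul_left q q⁻¹ a] at h1
      have h2 := eq_inv_of_mul_eq_one_right h1
      rw [h2]
      refine T.inv_mem (hq' _ ?_)
      simpa using hAnormal.conj_mem a ha q⁻¹
  -- the closure of the z's together with A is everything
  have hKtop : ∀ x : H, x ∈ Subgroup.closure (Set.range z) ⊔ A := by
    set K := Subgroup.closure (Set.range z) ⊔ A with hK
    have hyK : ∀ j, y j ∈ K ⊔ Subgroup.lowerCentralSeries (⊤ : Subgroup H) 1 := by
      intro j
      have hyz : y j = z j * ⁅(z j)⁻¹, (v j)⁻¹⁆ := by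
        rw [hz]; simp only [commutatorElement_def]; group
      rw [hyz]
      refine Subgroup.mul_mem _ (Subgroup.mem_sup_left (Subgroup.mem_sup_left
        (Subgroup.subset_closure ⟨j, rfl⟩))) (Subgroup.mem_sup_right ?_)
      have : ⁅(z j)⁻¹, (v j)⁻¹⁆ ∈ commutator H :=
        Subgroup.commutator_mem_commutator (Subgroup.mem_top _) (Subgroup.mem_top _)
      rwa [Subgroup.top_lowerCentralSeries_one]
    have hbase : ∀ x : H, x ∈ K ⊔ Subgroup.lowerCentralSeries (⊤ : Subgroup H) 1 := by
      intro x
      obtain ⟨L, rfl⟩ := hgen x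
      induction L with
      | nil => simpa using Subgroup.one_mem _
      | cons j t ih =>
        rw [List.map_cons, List.prod_cons]
        exact Subgroup.mul_mem _ (hyK j) ih
    have hiter : ∀ j : ℕ, 1 ≤ j → ∀ x : H, x ∈ K ⊔ Subgroup.lowerCentralSeries (⊤ : Subgroup H) j := by
      intro j hj
      induction j, hj using Nat.le_induction with
      | base => exact hbase
      | succ j hj ih => exact sup_lcs_step K j hj ih
    intro x
    have := hiter c hc x
    rwa [← hA, sup_eq_left.mpr (le_sup_right : A ≤ K)] at this
  -- all commutators ⁅w, a⁆ with a ∈ A lie in T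
  have hTall : ∀ (w : H), ∀ a ∈ A, ⁅w, a⁆ ∈ T := by
    intro w a ha
    have hw := hKtop w
    rw [← SetLike.mem_coe, Subgroup.mul_normal] at hw
    obtain ⟨q, hq, b, hb, rfl⟩ := hw
    rw [comm_mul_left q b a]
    have h1 : b * a * b⁻¹ = a := by rw [habel b hb a ha]; group
    have h2 : ⁅b, a⁆ = 1 := commutatorElement_eq_one_iff_commute.mpr (habel b hb a ha)
    rw [h1, h2, mul_one]
    exact hTclosure q hq a ha
  -- hence the error term e is in T
  have heT : ((List.ofFn u).prod)⁻¹ * d ∈ T := by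
    have he := hg
    have hle : Subgroup.lowerCentralSeries (⊤ : Subgroup H) (c+1) ≤ T := by
      have hc1 : Subgroup.lowerCentralSeries (⊤ : Subgroup H) (c+1) = ⁅Subgroup.lowerCentralSeries (⊤ : Subgroup H) c, ⊤⁆ := rfl
      rw [hc1, Subgroup.commutator_le]
      intro a ha w _
      have : ⁅a, w⁆ = (⁅w, a⁆)⁻¹ := (commutatorElement_inv w a).symm
      rw [this]
      exact T.inv_mem (hTall w a ha)
    exact hle he
  obtain ⟨a, haA, hae⟩ := heT
  -- final assembly
  refine ⟨fun i => g i * ((v i)⁻¹ * a i * v i), ?_⟩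
  have hper : (fun i => ⁅y i, g i * ((v i)⁻¹ * a i * v i)⁆) =
      fun i => u i * (g i * ⁅y i, (v i)⁻¹ * a i * v i⁆ * (g i)⁻¹) := by
    funext i
    rw [hu]; exact comm_mul_right (y i) (g i) _
  have hpair : (List.ofFn fun i => ⁅y i, g i * ((v i)⁻¹ * a i * v i)⁆) =
      ((List.ofFn fun i => (u i, g i * ⁅y i, (v i)⁻¹ * a i * v i⁆ * (g i)⁻¹)).map
        fun p => p.1 * p.2) := by
    rw [List.map_ofFn]
    rw [hper]; rfl
  have hfst : ((List.ofFn fun i => (u i, g i * ⁅y i, (v i)⁻¹ * a i * v i⁆ * (g i)⁻¹)).map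
      Prod.fst) = List.ofFn u := by
    rw [List.map_ofFn]; rfl
  have hcalc : (List.ofFn fun i => ⁅y i, g i * ((v i)⁻¹ * a i * v i)⁆).prod =
      (List.ofFn u).prod * ((List.ofFn u).prod)⁻¹ * d := by
    rw [hpair, push_prod, hfst, tw_ofFn]
    have hterm : (fun i => (((List.ofFn u).drop (i.val+1)).prod)⁻¹ *
        (g i * ⁅y i, (v i)⁻¹ * a i * v i⁆ * (g i)⁻¹) * ((List.ofFn u).drop (i.val+1)).prod) =
        fun i => ⁅z i, a i⁆ := by
      funext i
      have hsv : (((List.ofFn u).drop (i.val+1)).prod)⁻¹ *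
          (g i * ⁅y i, (v i)⁻¹ * a i * v i⁆ * (g i)⁻¹) * ((List.ofFn u).drop (i.val+1)).prod =
          v i * ⁅y i, (v i)⁻¹ * a i * v i⁆ * (v i)⁻¹ := by
        rw [hv, hs]; group
      rw [hsv]
      have hzi : z i = v i * y i * (v i)⁻¹ := by rw [hz]
      rw [hzi]
      simp only [commutatorElement_def]
      group
    rw [hterm, ← hae]
    group
  rw [hcalc]
  group
end Endgame


section GenericPal
variable {G : Type*} [Group G] {n : ℕ}

lemma evalWord_append (X : Fin n → G) (w w' : List (Fin n × Bool)) :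
    evalWord X (w ++ w') = evalWord X w * evalWord X w' := by
  simp [evalWord]

lemma evalWord_true_list (X : Fin n → G) (L : List (Fin n)) :
    evalWord X (L.map fun j => (j, true)) = (L.map X).prod := by
  simp [evalWord, List.map_map, Function.comp_def]

lemma evalWord_true_reverse (X : Fin n → G) (hy2 : ∀ i, X i * X i = 1) (L : List (Fin n)) :
    evalWord X ((L.map fun j => (j, true)).reverse) = ((L.map X).prod)⁻¹ := by
  have hinv : ∀ i, (X i)⁻¹ = X i := fun i => inv_eq_of_mul_eq_one_right (hy2 i)
  induction L with
  | nil => simp [evalWord]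
  | cons j t ih =>
    rw [List.map_cons, List.reverse_cons, evalWord_append, ih, List.map_cons, List.prod_cons,
      mul_inv_rev, ← hinv j]
    congr 1
    simp [evalWord]

lemma pal_one (X : Fin n → G) : IsPalindrome X 1 := ⟨[], rfl, rfl⟩

lemma pal_gen (X : Fin n → G) (i : Fin n) : IsPalindrome X (X i) :=
  ⟨[(i, true)], rfl, by simp [evalWord]⟩

lemma pal_conj (X : Fin n → G) (hy2 : ∀ i, X i * X i = 1)
    (hgen : ∀ g : G, ∃ L : List (Fin n), g = (L.map X).prod) (w : G) (i : Fin n) :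
    IsPalindrome X (w * X i * w⁻¹) := by
  obtain ⟨L, rfl⟩ := hgen w
  refine ⟨(L.map fun j => (j, true)) ++ [(i, true)] ++ (L.map fun j => (j, true)).reverse,
    ?_, ?_⟩
  · simp [List.reverse_append]
  · rw [evalWord_append, evalWord_append, evalWord_true_list,
      evalWord_true_reverse X hy2]
    congr 1
    simp [evalWord]

lemma comm_two_pals (X : Fin n → G) (hy2 : ∀ i, X i * X i = 1) (i : Fin n) (h : G) :
    ⁅X i, h⁆ = X i * (h * X i * h⁻¹) := by
  have hinv : (X i)⁻¹ = X i := inv_eq_of_mul_eq_one_right (hy2 i)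
  rw [commutatorElement_def, hinv]
  group

lemma isPalProd_of_list (X : Fin n → G) (Lst : List G) (k : ℕ) (hk : Lst.length = k)
    (hmem : ∀ x ∈ Lst, IsPalindrome X x) (g : G) (hp : Lst.prod = g) : IsPalProd X k g := by
  subst hk
  exact ⟨Lst.get, fun i => hmem _ (List.get_mem Lst i), by rw [List.ofFn_get]; exact hp⟩

/-- the abelianization-counting decomposition -/
lemma abel_decomp (y : Fin n → G) (hy2 : ∀ i, y i * y i = 1)
    (hgen : ∀ g : G, ∃ L : List (Fin n), g = (L.map y).prod) (g : G) :
    ∃ ε : Fin n → Bool,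
      ((List.ofFn fun i => cond (ε i) (y i) 1).prod)⁻¹ * g ∈ Subgroup.lowerCentralSeries (⊤ : Subgroup G) 1 := by
  classical
  obtain ⟨L, rfl⟩ := hgen g
  set ρ := (Abelianization.of : G →* Abelianization G) with hρ
  refine ⟨fun i => decide (L.count i % 2 = 1), ?_⟩
  have key : ρ ((L.map y).prod) =
      ρ ((List.ofFn fun i => cond (decide (L.count i % 2 = 1)) (y i) 1).prod) := by
    rw [map_list_prod, List.map_map, Finset.prod_list_map_count, map_list_prod, List.map_ofFn,
      List.prod_ofFn]
    rw [Finset.prod_subset (Finset.subset_univ L.toFinset) (fun x _ hx => by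
      rw [List.count_eq_zero_of_not_mem (by simpa using hx), pow_zero])]
    refine Finset.prod_congr rfl fun i _ => ?_
    have h1 : (ρ ∘ y) i ^ L.count i = (ρ ∘ y) i ^ (L.count i % 2) := by
      refine pow_eq_pow_mod _ ?_
      rw [pow_two]
      simp only [Function.comp_apply, ← map_mul, hy2 i, map_one]
    rw [h1]
    rcases Nat.mod_two_eq_zero_or_one (L.count i) with h | h <;> simp [h]
  have hone : ρ (((List.ofFn fun i => cond (decide (L.count i % 2 = 1)) (y i) 1).prod)⁻¹ *
      (L.map y).prod) = 1 := by
    rw [map_mul, map_inv, key]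
    group
  rw [Subgroup.top_lowerCentralSeries_one]
  exact (QuotientGroup.eq_one_iff _).mp hone

end GenericPal

section UpperMain
variable {G : Type*} [Group G] {n : ℕ}

theorem upper_main (y : Fin n → G) (c : ℕ) (hc : 1 ≤ c)
    (hy2 : ∀ i, y i * y i = 1)
    (hgen : ∀ g : G, ∃ L : List (Fin n), g = (L.map y).prod)
    (habel : ∀ a ∈ Subgroup.lowerCentralSeries (⊤ : Subgroup G) c, ∀ b ∈ Subgroup.lowerCentralSeries (⊤ : Subgroup G) c, a * b = b * a)
    (g : G) : IsPalProd y (3 * n) g := by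
  classical
  obtain ⟨ε, hd⟩ := abel_decomp y hy2 hgen g
  obtain ⟨h, hh⟩ := comm_width y c hc hgen habel _ hd
  set P1 : List G := List.ofFn fun i => cond (ε i) (y i) 1 with hP1
  set L2 : List G := (List.ofFn fun i => [y i, h i * y i * (h i)⁻¹]).flatten with hL2
  have hlen : (P1 ++ L2).length = 3 * n := by
    rw [List.length_append, hP1, List.length_ofFn, hL2, List.length_flatten, List.map_ofFn]
    have : (List.length ∘ fun i : Fin n => [y i, h i * y i * (h i)⁻¹]) = fun _ => 2 := by
      funext i; rfl
    rw [this, List.ofFn_const, List.sum_replicate, smul_eq_mul]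
    omega
  have hmem : ∀ x ∈ P1 ++ L2, IsPalindrome y x := by
    intro x hx
    rcases List.mem_append.mp hx with hx | hx
    · rw [hP1] at hx
      obtain ⟨i, hi⟩ := List.mem_ofFn.mp hx
      cases hεi : ε i <;> rw [hεi] at hi <;> simp only [cond] at hi
      · exact hi ▸ pal_one y
      · exact hi ▸ pal_gen y i
    · rw [hL2] at hx
      obtain ⟨l, hl, hxl⟩ := List.mem_flatten.mp hx
      obtain ⟨i, hi⟩ := List.mem_ofFn.mp hl
      rw [← hi] at hxl
      simp only [List.mem_cons, List.not_mem_nil, or_false] at hxl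
      rcases hxl with rfl | rfl
      · exact pal_gen y i
      · exact pal_conj y hy2 hgen (h i) i
  have hprod : (P1 ++ L2).prod = g := by
    rw [List.prod_append]
    have h2 : L2.prod = (List.ofFn fun i => ⁅y i, h i⁆).prod := by
      rw [hL2, List.prod_flatten, List.map_ofFn]
      have : (List.prod ∘ fun i : Fin n => [y i, h i * y i * (h i)⁻¹]) =
          fun i => ⁅y i, h i⁆ := by
        funext i
        simp only [Function.comp_apply, List.prod_cons, List.prod_nil, mul_one]
        exact (comm_two_pals y hy2 i (h i)).symm
      rw [this]
    rw [h2, ← hh]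
    group
  exact isPalProd_of_list y (P1 ++ L2) (3*n) hlen hmem g hprod

end UpperMain

section TAN
variable (n c : ℕ)

def anProj : FreeGroup (Fin n) →* FreeAbelianByNilpotent n c := QuotientGroup.mk' _

def tanProj : FreeAbelianByNilpotent n c →* TildeAN n c := QuotientGroup.mk' _

def fullProj : FreeGroup (Fin n) →* TildeAN n c := (tanProj n c).comp (anProj n c)

lemma fullProj_surjective : Function.Surjective (fullProj n c) :=
  (QuotientGroup.mk'_surjective _).comp (QuotientGroup.mk'_surjective _)

lemma fullProj_of (i : Fin n) : fullProj n c (FreeGroup.of i) = tanGen n c i := rfl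

lemma fullProj_pure (i : Fin n) : fullProj n c (pure i : FreeGroup (Fin n)) = tanGen n c i := rfl

lemma tan_sq (i : Fin n) : tanGen n c i * tanGen n c i = 1 := by
  have h1 : tanGen n c i * tanGen n c i = tanProj n c (anGen n c i ^ 2) := by
    rw [pow_two, map_mul]; rfl
  rw [h1]
  rw [show tanProj n c (anGen n c i ^ 2) = (QuotientGroup.mk (anGen n c i ^ 2) :
    TildeAN n c) from rfl, QuotientGroup.eq_one_iff]
  exact Subgroup.subset_normalClosure ⟨i, rfl⟩

lemma tan_gen_list : ∀ g : TildeAN n c, ∃ L : List (Fin n), g = (L.map (tanGen n c)).prod := by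
  intro g
  obtain ⟨x, rfl⟩ := fullProj_surjective n c g
  induction x using FreeGroup.induction_on with
  | C1 => exact ⟨[], by simp⟩
  | of i => exact ⟨[i], by simp [fullProj_of]⟩
  | inv_of i _ =>
    refine ⟨[i], ?_⟩
    rw [map_inv, fullProj_of, inv_eq_of_mul_eq_one_right (tan_sq n c i)]
    simp
  | mul a b ha hb =>
    obtain ⟨La, hLa⟩ := ha
    obtain ⟨Lb, hLb⟩ := hb
    exact ⟨La ++ Lb, by rw [map_mul, hLa, hLb, List.map_append, List.prod_append]⟩

lemma tan_abel : ∀ a ∈ Subgroup.lowerCentralSeries (⊤ : Subgroup (TildeAN n c)) c,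
    ∀ b ∈ Subgroup.lowerCentralSeries (⊤ : Subgroup (TildeAN n c)) c, a * b = b * a := by
  intro a ha b hb
  rw [← lcs_map_eq (fullProj n c) (fullProj_surjective n c) c] at ha hb
  obtain ⟨a', ha', rfl⟩ := ha
  obtain ⟨b', hb', rfl⟩ := hb
  have hker : anProj n c ⁅a', b'⁆ = 1 := by
    have hmem : ⁅a', b'⁆ ∈ ⁅Subgroup.lowerCentralSeries (⊤ : Subgroup (FreeGroup (Fin n))) c,
        Subgroup.lowerCentralSeries (⊤ : Subgroup (FreeGroup (Fin n))) c⁆ :=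
      Subgroup.commutator_mem_commutator ha' hb'
    rw [← QuotientGroup.ker_mk' (⁅Subgroup.lowerCentralSeries (⊤ : Subgroup (FreeGroup (Fin n))) c,
      Subgroup.lowerCentralSeries (⊤ : Subgroup (FreeGroup (Fin n))) c⁆)] at hmem
    exact hmem
  have hfull : fullProj n c ⁅a', b'⁆ = 1 := by
    show tanProj n c (anProj n c ⁅a', b'⁆) = 1
    rw [hker, map_one]
  rw [map_commutatorElement] at hfull
  exact (commutatorElement_eq_one_iff_commute.mp hfull).eq

theorem tan_upper (hc : 1 ≤ c) (g : TildeAN n c) : IsPalProd (tanGen n c) (3 * n) g :=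
  upper_main (tanGen n c) c hc (tan_sq n c) (tan_gen_list n c) (tan_abel n c) g

end TAN

section Lower
variable (n c : ℕ)

def phiBase : FreeGroup (Fin n) →* Multiplicative (Fin n → ZMod 2) :=
  FreeGroup.lift fun i => Multiplicative.ofAdd (Pi.single i (1 : ZMod 2))

lemma phiBase_comm_le :
    ⁅Subgroup.lowerCentralSeries (⊤ : Subgroup (FreeGroup (Fin n))) c, Subgroup.lowerCentralSeries (⊤ : Subgroup (FreeGroup (Fin n))) c⁆ ≤
      (phiBase n).ker := by
  rw [Subgroup.commutator_le]
  intro a _ b _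
  rw [MonoidHom.mem_ker, map_commutatorElement]
  exact commutatorElement_eq_one_iff_commute.mpr (mul_comm _ _)

def phiAN : FreeAbelianByNilpotent n c →* Multiplicative (Fin n → ZMod 2) :=
  QuotientGroup.lift _ (phiBase n) (fun x hx => phiBase_comm_le n c hx)

lemma single_add_self (i : Fin n) :
    Pi.single i (1 : ZMod 2) + Pi.single i (1 : ZMod 2) = (0 : Fin n → ZMod 2) := by
  funext j
  by_cases hj : j = i
  · subst hj
    simp only [Pi.add_apply, Pi.single_eq_same, Pi.zero_apply]
    decide
  · simp [Pi.single_eq_of_ne hj]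

lemma phiAN_sq (i : Fin n) : phiAN n c (anGen n c i ^ 2) = 1 := by
  have h1 : phiAN n c (anGen n c i) = Multiplicative.ofAdd (Pi.single i (1 : ZMod 2)) := by
    show phiAN n c (QuotientGroup.mk (FreeGroup.of i)) = _
    rw [show phiAN n c (QuotientGroup.mk (FreeGroup.of i)) = phiBase n (FreeGroup.of i) from
      QuotientGroup.lift_mk _ _ _, phiBase, FreeGroup.lift_apply_of]
  rw [pow_two, map_mul, h1, ← ofAdd_add, single_add_self]
  rfl

def phiTAN : TildeAN n c →* Multiplicative (Fin n → ZMod 2) :=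
  QuotientGroup.lift _ (phiAN n c)
    (fun x hx => Subgroup.normalClosure_le_normal (N := (phiAN n c).ker)
      (by rintro x' ⟨i, rfl⟩; exact phiAN_sq n c i) hx)

lemma phi_tan (i : Fin n) :
    phiTAN n c (tanGen n c i) = Multiplicative.ofAdd (Pi.single i (1 : ZMod 2)) := by
  show phiTAN n c (QuotientGroup.mk (anGen n c i)) = _
  rw [show phiTAN n c (QuotientGroup.mk (anGen n c i)) = phiAN n c (anGen n c i) from
    QuotientGroup.lift_mk _ _ _]
  show phiAN n c (QuotientGroup.mk (FreeGroup.of i)) = _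
  rw [show phiAN n c (QuotientGroup.mk (FreeGroup.of i)) = phiBase n (FreeGroup.of i) from
    QuotientGroup.lift_mk _ _ _, phiBase, FreeGroup.lift_apply_of]

lemma phi_letter (l : Fin n × Bool) :
    phiTAN n c (if l.2 then tanGen n c l.1 else (tanGen n c l.1)⁻¹) =
      Multiplicative.ofAdd (Pi.single l.1 (1 : ZMod 2)) := by
  rcases l with ⟨i, b⟩
  cases b
  · have h1 : (if (false : Bool) = true then tanGen n c i else (tanGen n c i)⁻¹) =
        (tanGen n c i)⁻¹ := by simp
    rw [h1, inv_eq_of_mul_eq_one_right (tan_sq n c i), phi_tan]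
  · have h1 : (if (true : Bool) = true then tanGen n c i else (tanGen n c i)⁻¹) =
        tanGen n c i := by simp
    rw [h1, phi_tan]

lemma pal_decomp {α : Type*} : ∀ (w : List α), w.reverse = w →
    w = [] ∨ (∃ l, w = [l]) ∨ ∃ (l : α) (u : List α), u.reverse = u ∧ w = l :: u ++ [l] := by
  intro w h
  rcases w with _ | ⟨a, w'⟩
  · exact Or.inl rfl
  rcases List.eq_nil_or_concat' w' with rfl | ⟨u, d, rfl⟩
  · exact Or.inr (Or.inl ⟨a, rfl⟩)
  right; right
  rw [List.reverse_cons, List.reverse_append, List.reverse_singleton] at h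
  simp only [List.singleton_append, List.cons_append, List.cons.injEq] at h
  obtain ⟨h1, h2⟩ := h
  subst h1
  refine ⟨d, u, ?_, rfl⟩
  have h3 : u.reverse ++ [d] = u ++ [d] := by simpa using h2
  exact (List.append_left_inj [d]).mp h3

lemma pal_phi : ∀ (N : ℕ) (w : List (Fin n × Bool)), w.length ≤ N → w.reverse = w →
    phiTAN n c (evalWord (tanGen n c) w) = 1 ∨
    ∃ i : Fin n, phiTAN n c (evalWord (tanGen n c) w) =
      Multiplicative.ofAdd (Pi.single i (1 : ZMod 2)) := by
  intro N
  induction N with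
  | zero =>
    intro w hw _
    left
    have : w = [] := List.length_eq_zero_iff.mp (Nat.le_zero.mp hw)
    subst this
    simp [evalWord]
  | succ N ih =>
    intro w hw hrev
    rcases pal_decomp w hrev with rfl | ⟨l, rfl⟩ | ⟨l, u, hu, rfl⟩
    · left; simp [evalWord]
    · right
      refine ⟨l.1, ?_⟩
      have : evalWord (tanGen n c) [l] =
          (if l.2 then tanGen n c l.1 else (tanGen n c l.1)⁻¹) := by
        simp [evalWord]
      rw [this, phi_letter]
    · have hlen : u.length ≤ N := by
        have := hw
        simp only [List.length_cons, List.length_append, List.length_singleton] at this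
        omega
      have hsplit : evalWord (tanGen n c) (l :: u ++ [l]) =
          (if l.2 then tanGen n c l.1 else (tanGen n c l.1)⁻¹) *
            evalWord (tanGen n c) u * (if l.2 then tanGen n c l.1 else (tanGen n c l.1)⁻¹) := by
        have : l :: u ++ [l] = [l] ++ u ++ [l] := by simp
        rw [this, evalWord_append, evalWord_append]
        have h1 : evalWord (tanGen n c) [l] =
            (if l.2 then tanGen n c l.1 else (tanGen n c l.1)⁻¹) := by simp [evalWord]
        rw [h1]
      rw [hsplit, map_mul, map_mul, phi_letter]
      have hsq : Multiplicative.ofAdd (Pi.single l.1 (1 : ZMod 2) : Fin n → ZMod 2) *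
          Multiplicative.ofAdd (Pi.single l.1 (1 : ZMod 2) : Fin n → ZMod 2) = 1 := by
        rw [← ofAdd_add, single_add_self]; rfl
      have hre : Multiplicative.ofAdd (Pi.single l.1 (1 : ZMod 2) : Fin n → ZMod 2) *
          phiTAN n c (evalWord (tanGen n c) u) *
          Multiplicative.ofAdd (Pi.single l.1 (1 : ZMod 2) : Fin n → ZMod 2) =
          phiTAN n c (evalWord (tanGen n c) u) := by
        rw [mul_comm _ (phiTAN n c (evalWord (tanGen n c) u)), mul_assoc, hsq, mul_one]
      rw [hre]
      exact ih u hlen hu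

end Lower

section Final

theorem tan_lower (n c : ℕ) : (n : ℕ∞) ≤ palWidth (tanGen n c) := by
  classical
  set g₀ := (List.ofFn fun i => tanGen n c i).prod with hg₀
  have hφ : phiTAN n c g₀ = Multiplicative.ofAdd (fun _ : Fin n => (1 : ZMod 2)) := by
    rw [hg₀, ofFn_prod_map]
    have hfn : (fun i => phiTAN n c (tanGen n c i)) =
        fun i : Fin n => Multiplicative.ofAdd (Pi.single i (1 : ZMod 2)) :=
      funext fun i => phi_tan n c i
    rw [hfn, List.prod_ofFn, ← ofAdd_sum]
    congr 1
    exact Finset.univ_sum_single (fun _ : Fin n => (1 : ZMod 2))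
  have hkey : ∀ m : ℕ, IsPalProd (tanGen n c) m g₀ → n ≤ m := by
    intro m hpp
    obtain ⟨f, hfpal, hfprod⟩ := hpp
    have hvals : ∀ i : Fin m, phiTAN n c (f i) = 1 ∨
        ∃ j : Fin n, phiTAN n c (f i) = Multiplicative.ofAdd (Pi.single j (1 : ZMod 2)) := by
      intro i
      obtain ⟨w, hrev, heval⟩ := hfpal i
      rw [← heval]
      exact pal_phi n c w.length w le_rfl hrev
    have hex : ∀ jj : Fin n, ∃ i : Fin m,
        phiTAN n c (f i) = Multiplicative.ofAdd (Pi.single jj (1 : ZMod 2)) := by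
      intro jj
      by_contra hcon
      push_neg at hcon
      set ev : Multiplicative (Fin n → ZMod 2) →* Multiplicative (ZMod 2) :=
        AddMonoidHom.toMultiplicative (Pi.evalAddMonoidHom (fun _ : Fin n => ZMod 2) jj) with hev
      have hev1 : ∀ v : Fin n → ZMod 2, ev (Multiplicative.ofAdd v) =
          Multiplicative.ofAdd (v jj) := fun v => rfl
      have hall1 : ∀ i : Fin m, ev (phiTAN n c (f i)) = 1 := by
        intro i
        rcases hvals i with h | ⟨j, h⟩
        · rw [h, map_one]
        · rw [h, hev1]
          have hj : jj ≠ j := by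
            intro hj
            exact hcon i (by rw [h, hj])
          rw [Pi.single_eq_of_ne hj]
          rfl
      have hg1 : ev (phiTAN n c g₀) = 1 := by
        rw [← hfprod, ofFn_prod_map, ofFn_prod_map ev]
        have : (fun i => ev (phiTAN n c (f i))) = fun _ : Fin m => (1 : Multiplicative (ZMod 2)) :=
          funext fun i => hall1 i
        rw [this]
        simp
      rw [hφ, hev1] at hg1
      have h10 := congrArg Multiplicative.toAdd hg1
      exact one_ne_zero h10
    choose ι hι using hex
    have hinj : Function.Injective ι := by
      intro j1 j2 hj
      have h1 := hι j1
      have h2 := hι j2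
      rw [hj] at h1
      have h3 : Multiplicative.ofAdd (Pi.single j1 (1 : ZMod 2) : Fin n → ZMod 2) =
          Multiplicative.ofAdd (Pi.single j2 (1 : ZMod 2) : Fin n → ZMod 2) := h1.symm.trans h2
      have h4 : (Pi.single j1 (1 : ZMod 2) : Fin n → ZMod 2) = Pi.single j2 1 :=
        Multiplicative.ofAdd.injective h3
    -- evaluate at j1
      by_contra hne
      have h5 := congrFun h4 j1
      rw [Pi.single_eq_same, Pi.single_eq_of_ne hne] at h5
      exact one_ne_zero h5
    have hcard := Fintype.card_le_of_injective ι hinj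
    simpa using hcard
  have hlow : (n : ℕ∞) ≤ palLength (tanGen n c) g₀ := by
    refine le_sInf ?_
    rintro k ⟨m, rfl, hm⟩
    exact_mod_cast hkey m hm
  exact hlow.trans (le_iSup (fun g => palLength (tanGen n c) g) g₀)

theorem pw_bounds_final (n c : ℕ) (hn : 2 ≤ n) (hc : 1 ≤ c) :
    (n : ℕ∞) ≤ palWidth (tanGen n c) ∧ palWidth (tanGen n c) ≤ ((3 * n : ℕ) : ℕ∞) := by
  refine ⟨tan_lower n c, ?_⟩
  refine iSup_le fun g => sInf_le ⟨3 * n, rfl, tan_upper n c hc g⟩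

end Final

/-- For `c ≥ 1` and `n ≥ 2`, `n ≤ pw(ÃN_n, Y) ≤ 3n`. -/
theorem pw_tildeAN_bounds (n c : ℕ) (hn : 2 ≤ n) (hc : 1 ≤ c) :
    (n : ℕ∞) ≤ palWidth (tanGen n c) ∧ palWidth (tanGen n c) ≤ ((3 * n : ℕ) : ℕ∞) :=
  pw_bounds_final n c hn hc
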